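/- Let A be a commutative ring and I an ideal of A. The amalgamated duplication A⋈I = {(a, a+i) : a ∈ A, i ∈ I} is self-injective if and only if A is self-injective and there exists an idempotent e ∈ A with I = eA. -/

import Mathlib

section Amalg
variable {A B : Type*} [CommRing A] [CommRing B]

/-- The amalgamation `A ⋈^f J = {(a, f a + j) | a ∈ A, j ∈ J}` as a subring of `A × B`. -/
def amalg (f : A →+* B) (J : Ideal B) : Subring (A × B) where
  carrier := {x | x.2 - f x.1 ∈ J}
  one_mem' := by simp
  zero_mem' := by simp
  mul_mem' := by
    rintro x y hx hy
    show (x * y).2 - f (x * y).1 ∈ J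
    have h : (x * y).2 - f (x * y).1 = x.2 * (y.2 - f y.1) + (x.2 - f x.1) * f y.1 := by
      simp only [Prod.fst_mul, Prod.snd_mul, map_mul]; ring
    rw [h]
    exact J.add_mem (J.mul_mem_left _ hy) (J.mul_mem_right _ hx)
  add_mem' := by
    rintro x y hx hy
    show (x + y).2 - f (x + y).1 ∈ J
    have h : (x + y).2 - f (x + y).1 = (x.2 - f x.1) + (y.2 - f y.1) := by
      simp only [Prod.fst_add, Prod.snd_add, map_add]; ring
    rw [h]; exact J.add_mem hx hy
  neg_mem' := by
    intro x hx
    show (-x).2 - f (-x).1 ∈ J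
    have h : (-x).2 - f (-x).1 = -(x.2 - f x.1) := by
      simp only [Prod.fst_neg, Prod.snd_neg, map_neg]; ring
    rw [h]; exact J.neg_mem hx

/-- The canonical embedding `A → A ⋈^f J`, `a ↦ (a, f a)`. -/
def amalgIota (f : A →+* B) (J : Ideal B) : A →+* amalg f J :=
  ((RingHom.id A).prod f).codRestrict (amalg f J) (fun a =>
    show (a, f a).2 - f (a, f a).1 ∈ J by simp)

/-- The projection `A ⋈^f J → A`. -/
def amalgFst (f : A →+* B) (J : Ideal B) : amalg f J →+* A :=
  (RingHom.fst A B).comp (amalg f J).subtype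

end Amalg

set_option synthInstance.maxHeartbeats 1000000
set_option maxHeartbeats 1000000

namespace DupAux


lemma exists_mul_of_inj {S : Type*} [CommRing S] (h : Module.Injective S S)
    (L : Submodule S S) (F : L →ₗ[S] S) :
    ∃ ρ : S, ∀ (x : S) (hx : x ∈ L), F ⟨x, hx⟩ = x * ρ := by
  obtain ⟨H, hH⟩ := h.out L.subtype Subtype.val_injective F
  refine ⟨H 1, fun x hx => ?_⟩
  have h1 : H x = x • H 1 := by rw [← H.map_smul, smul_eq_mul, mul_one]
  have h2 := hH ⟨x, hx⟩
  simp only [Submodule.subtype_apply] at h2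
  rw [← h2, h1, smul_eq_mul]

variable {A : Type*} [CommRing A] (I : Ideal A)

lemma mem_amalg {x : A × A} : x ∈ amalg (RingHom.id A) I ↔ x.2 - x.1 ∈ I := Iff.rfl

lemma exists_idem (h : Module.Injective (amalg (RingHom.id A) I) (amalg (RingHom.id A) I)) :
    ∃ e : A, IsIdempotentElem e ∧ I = Ideal.span {e} := by
  set R := amalg (RingHom.id A) I with hR
  have memII : ∀ {x y : A}, x ∈ I → y ∈ I → ((x, y) : A × A) ∈ R := fun hx hy =>
    (mem_amalg I).2 (I.sub_mem hy hx)
  let L : Submodule R R :=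
    { carrier := {z | ((z : A × A)).1 ∈ I ∧ ((z : A × A)).2 ∈ I}
      add_mem' := fun ha hb => ⟨I.add_mem ha.1 hb.1, I.add_mem ha.2 hb.2⟩
      zero_mem' := ⟨I.zero_mem, I.zero_mem⟩
      smul_mem' := by
        rintro c z ⟨h1, h2⟩
        refine ⟨?_, ?_⟩
        · show ((c * z : R) : A × A).1 ∈ I
          rw [Subring.coe_mul, Prod.fst_mul]
          exact I.mul_mem_left _ h1
        · show ((c * z : R) : A × A).2 ∈ I
          rw [Subring.coe_mul, Prod.snd_mul]
          exact I.mul_mem_left _ h2 }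
  have hLmem : ∀ {z : R}, z ∈ L ↔ ((z : A × A)).1 ∈ I ∧ ((z : A × A)).2 ∈ I := Iff.rfl
  let F : L →ₗ[R] R :=
    { toFun := fun z => ⟨(0, ((z : R) : A × A).2), (mem_amalg I).2 (by simpa using z.2.2)⟩
      map_add' := by
        rintro z w
        apply Subtype.ext
        apply Prod.ext <;> simp
      map_smul' := by
        rintro c z
        apply Subtype.ext
        apply Prod.ext <;> simp }
  obtain ⟨ρ, hρ⟩ := exists_mul_of_inj h L F
  obtain ⟨⟨a, b⟩, hab⟩ := ρ
  have key : ∀ i ∈ I, i * a = 0 ∧ i * b = i := by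
    intro i hi
    have hx : (⟨(i, i), memII hi hi⟩ : R) ∈ L := ⟨hi, hi⟩
    have := hρ _ hx
    have hval := congrArg (fun z : R => (z : A × A)) this
    simp only [F] at hval
    rw [Subring.coe_mul] at hval
    exact ⟨(Prod.ext_iff.1 hval.symm).1, by
      have := (Prod.ext_iff.1 hval).2; simpa using this.symm⟩
  have heI : b - a ∈ I := hab
  refine ⟨b - a, ?_, ?_⟩
  · obtain ⟨h1, h2⟩ := key _ heI
    show (b - a) * (b - a) = b - a
    linear_combination h2 - h1
  · apply le_antisymm
    · intro i hi
      obtain ⟨h1, h2⟩ := key i hi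
      have hii : i = (b - a) * i := by rw [mul_comm, mul_sub, h2, h1]; ring
      exact Ideal.mem_span_singleton.2 ⟨i, hii.symm ▸ hii⟩
    · rw [Ideal.span_le, Set.singleton_subset_iff]; exact heI

lemma baer_A (h : Module.Injective (amalg (RingHom.id A) I) (amalg (RingHom.id A) I))
    (e : A) (heI : e ∈ I) (hmul : ∀ i ∈ I, e * i = i) : Module.Baer A A := by
  set R := amalg (RingHom.id A) I with hR
  have hkill : ∀ i ∈ I, (1 - e) * i = 0 := fun i hi => by
    have := hmul i hi; linear_combination -this
  intro J g
  let L : Submodule R R :=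
    { carrier := {z | ((z : A × A)).1 ∈ J}
      add_mem' := fun {z w} hz hw => by
        show ((z + w : R) : A × A).1 ∈ J
        rw [Subring.coe_add, Prod.fst_add]; exact J.add_mem hz hw
      zero_mem' := by show ((0 : R) : A × A).1 ∈ J; simp
      smul_mem' := fun c z hz => by
        show ((c * z : R) : A × A).1 ∈ J
        rw [Subring.coe_mul, Prod.fst_mul]; exact J.mul_mem_left _ hz }
  let G : L → A := fun z => g ⟨((z : R) : A × A).1, z.2⟩
  have Gadd : ∀ z w : L, G (z + w) = G z + G w := by
    intro z w
    have h1 : (⟨(((z + w : L) : R) : A × A).1, (z + w).2⟩ : J)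
        = ⟨((z : R) : A × A).1, z.2⟩ + ⟨((w : R) : A × A).1, w.2⟩ := by
      apply Subtype.ext; simp
    show g _ = g _ + g _
    rw [h1, map_add]
  have Gsmul : ∀ (c : R) (z : L), G (c • z) = ((c : A × A)).1 * G z := by
    intro c z
    have h1 : (⟨(((c • z : L) : R) : A × A).1, (c • z).2⟩ : J)
        = ((c : A × A)).1 • ⟨((z : R) : A × A).1, z.2⟩ := by
      apply Subtype.ext
      show (((c • z : L) : R) : A × A).1 = ((c : A × A)).1 * ((z : R) : A × A).1
      have : ((c • z : L) : R) = c * (z : R) := rfl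
      rw [this, Subring.coe_mul, Prod.fst_mul]
    show g _ = _
    rw [h1, map_smul, smul_eq_mul]
  let F : L →ₗ[R] R :=
    { toFun := fun z => ⟨(G z, (1 - e) * G z + e * ((z : R) : A × A).2), by
        refine (mem_amalg I).2 ?_
        have he : (1 - e) * G z + e * ((z : R) : A × A).2 - G z
            = e * (((z : R) : A × A).2 - G z) := by ring
        rw [he]; exact I.mul_mem_right _ heI⟩
      map_add' := by
        intro z w
        apply Subtype.ext
        apply Prod.ext
        · show G (z + w) = G z + G w
          exact Gadd z w
        · show (1 - e) * G (z + w) + e * (((z + w : L) : R) : A × A).2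
            = ((1 - e) * G z + e * ((z : R) : A × A).2)
              + ((1 - e) * G w + e * ((w : R) : A × A).2)
          have h2 : (((z + w : L) : R) : A × A).2
              = ((z : R) : A × A).2 + ((w : R) : A × A).2 := by simp
          rw [Gadd, h2]; ring
      map_smul' := by
        intro c z
        apply Subtype.ext
        apply Prod.ext
        · show G (c • z) = ((c : A × A)).1 * G z
          exact Gsmul c z
        · show (1 - e) * G (c • z) + e * (((c • z : L) : R) : A × A).2
            = ((c : A × A)).2 * ((1 - e) * G z + e * ((z : R) : A × A).2)
          have h2 : (((c • z : L) : R) : A × A).2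
              = ((c : A × A)).2 * ((z : R) : A × A).2 := by
            have : ((c • z : L) : R) = c * (z : R) := rfl
            rw [this, Subring.coe_mul, Prod.snd_mul]
          have h3 := hkill _ ((mem_amalg I).1 c.2)
          rw [Gsmul, h2]
          linear_combination (-(G z)) * h3
      }
  obtain ⟨ρ, hρ⟩ := exists_mul_of_inj h L F
  obtain ⟨⟨r, s⟩, hrs⟩ := ρ
  refine ⟨r • LinearMap.id, fun x hx => ?_⟩
  have hzR : ((x, x) : A × A) ∈ R := (mem_amalg I).2 (by simp)
  have hzL : (⟨(x, x), hzR⟩ : R) ∈ L := hx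
  have := hρ _ hzL
  have hval := congrArg (fun z : R => ((z : A × A)).1) this
  simp only [F] at hval
  rw [Subring.coe_mul] at hval
  have : G ⟨⟨(x, x), hzR⟩, hzL⟩ = x * r := hval
  show r • x = g ⟨x, hx⟩
  rw [smul_eq_mul, mul_comm]
  exact this.symm


lemma baer_R (hA : Module.Injective A A) (e : A) (hee : e * e = e)
    (hI : I = Ideal.span {e}) :
    Module.Baer (amalg (RingHom.id A) I) (amalg (RingHom.id A) I) := by
  set R := amalg (RingHom.id A) I with hR
  have heI : e ∈ I := hI ▸ Ideal.mem_span_singleton_self e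
  have hmul : ∀ i ∈ I, e * i = i := by
    intro i hi
    rw [hI, Ideal.mem_span_singleton] at hi
    obtain ⟨t, rfl⟩ := hi
    linear_combination t * hee
  have hkill : ∀ i ∈ I, (1 - e) * i = 0 := fun i hi => by
    linear_combination - hmul i hi
  intro L F
  have m1 : ∀ a : A, ((a, (1 - e) * a) : A × A) ∈ R := fun a => (mem_amalg I).2 (by
    have hh : (1 - e) * a - a = -(e * a) := by ring
    rw [hh]; exact I.neg_mem (I.mul_mem_right a heI))
  have m2 : ∀ c : A, ((0, e * c) : A × A) ∈ R := fun c => (mem_amalg I).2 (by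
    simpa using I.mul_mem_right c heI)
  have md : ∀ a : A, ((a, a) : A × A) ∈ R := fun a => (mem_amalg I).2 (by simp)
  have mE : ((1, 1 - e) : A × A) ∈ R := (mem_amalg I).2 (by
    have hh : (1 : A) - e - 1 = -e := by ring
    rw [hh]; exact I.neg_mem heI)
  set x₁ : A → R := fun a => ⟨(a, (1 - e) * a), m1 a⟩ with hx₁
  set x₂ : A → R := fun c => ⟨(0, e * c), m2 c⟩ with hx₂
  set d : A → R := fun a => ⟨(a, a), md a⟩ with hd
  set E₁ : R := ⟨(1, 1 - e), mE⟩ with hE₁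
  set E₂ : R := ⟨(0, e), by simpa using m2 1⟩ with hE₂
  -- basic algebra
  have x₁_add : ∀ a b : A, x₁ (a + b) = x₁ a + x₁ b := by
    intro a b; apply Subtype.ext; apply Prod.ext <;> simp <;> ring
  have x₂_add : ∀ a b : A, x₂ (a + b) = x₂ a + x₂ b := by
    intro a b; apply Subtype.ext; apply Prod.ext <;> simp <;> ring
  have x₁_smul : ∀ a b : A, x₁ (a * b) = d a * x₁ b := by
    intro a b; apply Subtype.ext; apply Prod.ext <;> simp <;> ring
  have x₂_smul : ∀ a b : A, x₂ (a * b) = d a * x₂ b := by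
    intro a b; apply Subtype.ext; apply Prod.ext <;> simp <;> ring
  have x₁_zero : x₁ 0 = 0 := by
    apply Subtype.ext; apply Prod.ext <;> simp [hx₁]
  have x₂_zero : x₂ 0 = 0 := by
    apply Subtype.ext; apply Prod.ext <;> simp [hx₂]
  let J₁ : Ideal A :=
    { carrier := {a | x₁ a ∈ L}
      add_mem' := fun {a b} ha hb => by
        show x₁ (a + b) ∈ L
        rw [x₁_add]; exact L.add_mem ha hb
      zero_mem' := by show x₁ 0 ∈ L; rw [x₁_zero]; exact L.zero_mem
      smul_mem' := fun c a ha => by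
        show x₁ (c * a) ∈ L
        rw [x₁_smul]
        have := L.smul_mem (d c) ha
        rwa [smul_eq_mul] at this }
  let J₂ : Ideal A :=
    { carrier := {c | x₂ c ∈ L}
      add_mem' := fun {a b} ha hb => by
        show x₂ (a + b) ∈ L
        rw [x₂_add]; exact L.add_mem ha hb
      zero_mem' := by show x₂ 0 ∈ L; rw [x₂_zero]; exact L.zero_mem
      smul_mem' := fun c a ha => by
        show x₂ (c * a) ∈ L
        rw [x₂_smul]
        have := L.smul_mem (d c) ha
        rwa [smul_eq_mul] at this }
  have hJ₁ : ∀ {a : A}, a ∈ J₁ ↔ x₁ a ∈ L := Iff.rfl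
  have hJ₂ : ∀ {c : A}, c ∈ J₂ ↔ x₂ c ∈ L := Iff.rfl
  let f₁ : J₁ →ₗ[A] A :=
    { toFun := fun a => ((F ⟨x₁ a, a.2⟩ : R) : A × A).1
      map_add' := by
        intro a b
        have h1 : (⟨x₁ ((a : A) + b), (a + b).2⟩ : L) = ⟨x₁ a, a.2⟩ + ⟨x₁ b, b.2⟩ := by
          apply Subtype.ext; exact x₁_add a b
        show ((F ⟨x₁ ((a : A) + b), (a + b).2⟩ : R) : A × A).1 = _
        rw [h1, map_add]
        simp
      map_smul' := by
        intro c a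
        have h1 : (⟨x₁ (c * (a : A)), (c • a).2⟩ : L) = d c • ⟨x₁ a, a.2⟩ := by
          apply Subtype.ext; exact x₁_smul c a
        show ((F ⟨x₁ (c * (a : A)), (c • a).2⟩ : R) : A × A).1 = _
        rw [h1, map_smul]
        show ((d c * F ⟨x₁ a, a.2⟩ : R) : A × A).1 = _
        rw [Subring.coe_mul, Prod.fst_mul]
        rfl }
  let f₂ : J₂ →ₗ[A] A :=
    { toFun := fun c => ((F ⟨x₂ c, c.2⟩ : R) : A × A).2
      map_add' := by
        intro a b
        have h1 : (⟨x₂ ((a : A) + b), (a + b).2⟩ : L) = ⟨x₂ a, a.2⟩ + ⟨x₂ b, b.2⟩ := by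
          apply Subtype.ext; exact x₂_add a b
        show ((F ⟨x₂ ((a : A) + b), (a + b).2⟩ : R) : A × A).2 = _
        rw [h1, map_add]
        simp
      map_smul' := by
        intro c a
        have h1 : (⟨x₂ (c * (a : A)), (c • a).2⟩ : L) = d c • ⟨x₂ a, a.2⟩ := by
          apply Subtype.ext; exact x₂_smul c a
        show ((F ⟨x₂ (c * (a : A)), (c • a).2⟩ : R) : A × A).2 = _
        rw [h1, map_smul]
        show ((d c * F ⟨x₂ a, a.2⟩ : R) : A × A).2 = _
        rw [Subring.coe_mul, Prod.snd_mul]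
        rfl }
  obtain ⟨r₁, hr₁⟩ := exists_mul_of_inj hA J₁ f₁
  obtain ⟨r₂, hr₂⟩ := exists_mul_of_inj hA J₂ f₂
  -- structural facts
  have S1 : ∀ (a : A) (ha : x₁ a ∈ L),
      ((F ⟨x₁ a, ha⟩ : R) : A × A).2 = (1 - e) * ((F ⟨x₁ a, ha⟩ : R) : A × A).1 := by
    intro a ha
    have hfix : E₁ • (⟨x₁ a, ha⟩ : L) = ⟨x₁ a, ha⟩ := by
      apply Subtype.ext
      show E₁ * x₁ a = x₁ a
      apply Subtype.ext; apply Prod.ext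
      · show 1 * a = a; ring
      · show (1 - e) * ((1 - e) * a) = (1 - e) * a
        linear_combination a * hee
    set w := F ⟨x₁ a, ha⟩ with hw
    have h1 : w = E₁ • w := by rw [hw, ← map_smul, hfix]
    have h2 : ((w : R) : A × A).2 = (1 - e) * ((w : R) : A × A).2 := by
      conv_lhs => rw [h1]
      rw [smul_eq_mul, Subring.coe_mul, Prod.snd_mul]
    have h3 : (1 - e) * (((w : R) : A × A).2 - ((w : R) : A × A).1) = 0 :=
      hkill _ ((mem_amalg I).1 w.2)
    linear_combination h2 + h3
  have S2 : ∀ (c : A) (hc : x₂ c ∈ L),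
      ((F ⟨x₂ c, hc⟩ : R) : A × A).1 = 0 ∧
      ((F ⟨x₂ c, hc⟩ : R) : A × A).2 = e * ((F ⟨x₂ c, hc⟩ : R) : A × A).2 := by
    intro c hc
    have hfix : E₂ • (⟨x₂ c, hc⟩ : L) = ⟨x₂ c, hc⟩ := by
      apply Subtype.ext
      show E₂ * x₂ c = x₂ c
      apply Subtype.ext; apply Prod.ext
      · show 0 * 0 = 0; ring
      · show e * (e * c) = e * c
        linear_combination c * hee
    set w := F ⟨x₂ c, hc⟩ with hw
    have h1 : w = E₂ • w := by rw [hw, ← map_smul, hfix]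
    constructor
    · conv_lhs => rw [h1]
      rw [smul_eq_mul, Subring.coe_mul, Prod.fst_mul]
      ring
    · conv_lhs => rw [h1]
      rw [smul_eq_mul, Subring.coe_mul, Prod.snd_mul]
  -- the multiplier
  have mρ : ((r₁, (1 - e) * r₁ + e * r₂) : A × A) ∈ R := (mem_amalg I).2 (by
    have hh : (1 - e) * r₁ + e * r₂ - r₁ = e * (r₂ - r₁) := by ring
    rw [hh]; exact I.mul_mem_right _ heI)
  set ρ : R := ⟨(r₁, (1 - e) * r₁ + e * r₂), mρ⟩ with hρdef
  refine ⟨ρ • LinearMap.id, fun z hz => ?_⟩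
  obtain ⟨⟨a, b⟩, hab⟩ := z
  have hba : b - a ∈ I := (mem_amalg I).1 hab
  have h1e : (1 - e) * b = (1 - e) * a := by linear_combination hkill _ hba
  have hE1z : E₁ * ⟨(a, b), hab⟩ = x₁ a := by
    apply Subtype.ext; apply Prod.ext
    · show 1 * a = a; ring
    · show (1 - e) * b = (1 - e) * a; exact h1e
  have hE2z : E₂ * ⟨(a, b), hab⟩ = x₂ b := by
    apply Subtype.ext; apply Prod.ext
    · show 0 * a = 0; ring
    · rfl
  have ha1 : x₁ a ∈ L := by
    rw [← hE1z]
    have := L.smul_mem E₁ hz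
    rwa [smul_eq_mul] at this
  have hb2 : x₂ b ∈ L := by
    rw [← hE2z]
    have := L.smul_mem E₂ hz
    rwa [smul_eq_mul] at this
  have hsplit : (⟨⟨(a, b), hab⟩, hz⟩ : L) = ⟨x₁ a, ha1⟩ + ⟨x₂ b, hb2⟩ := by
    apply Subtype.ext
    apply Subtype.ext; apply Prod.ext
    · show a = a + 0; ring
    · show b = (1 - e) * a + e * b
      linear_combination h1e
  have hF : F ⟨⟨(a, b), hab⟩, hz⟩ = F ⟨x₁ a, ha1⟩ + F ⟨x₂ b, hb2⟩ := by
    rw [hsplit, map_add]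
  have hw1a : ((F ⟨x₁ a, ha1⟩ : R) : A × A).1 = a * r₁ := hr₁ a ha1
  have hw1b : ((F ⟨x₁ a, ha1⟩ : R) : A × A).2 = (1 - e) * (a * r₁) := by
    rw [S1 a ha1, hw1a]
  have hw2a : ((F ⟨x₂ b, hb2⟩ : R) : A × A).1 = 0 := (S2 b hb2).1
  have hw2b : ((F ⟨x₂ b, hb2⟩ : R) : A × A).2 = b * r₂ := hr₂ b hb2
  have hw2e : ((F ⟨x₂ b, hb2⟩ : R) : A × A).2 = e * (b * r₂) := by
    conv_lhs => rw [(S2 b hb2).2]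
    rw [hw2b]
  show ρ • (⟨(a, b), hab⟩ : R) = F ⟨⟨(a, b), hab⟩, hz⟩
  rw [smul_eq_mul, hF]
  apply Subtype.ext; apply Prod.ext
  · show r₁ * a = ((F ⟨x₁ a, ha1⟩ : R) : A × A).1 + ((F ⟨x₂ b, hb2⟩ : R) : A × A).1
    rw [hw1a, hw2a]; ring
  · show ((1 - e) * r₁ + e * r₂) * b
        = ((F ⟨x₁ a, ha1⟩ : R) : A × A).2 + ((F ⟨x₂ b, hb2⟩ : R) : A × A).2
    rw [hw1b, hw2e]
    linear_combination r₁ * h1e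


end DupAux

/-- The amalgamated duplication `A⋈I` is self-injective iff `A` is
self-injective and `I = eA` for some idempotent `e`. -/
theorem duplication_selfInjective_iff {A : Type*} [CommRing A] (I : Ideal A) :
    Module.Injective (amalg (RingHom.id A) I) (amalg (RingHom.id A) I) ↔
      Module.Injective A A ∧ ∃ e : A, IsIdempotentElem e ∧ I = Ideal.span {e} := by
  constructor
  · intro h
    obtain ⟨e, hee, hI⟩ := DupAux.exists_idem I h
    have heI : e ∈ I := hI ▸ Ideal.mem_span_singleton_self e
    have hmul : ∀ i ∈ I, e * i = i := by
      intro i hi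
      rw [hI, Ideal.mem_span_singleton] at hi
      obtain ⟨t, rfl⟩ := hi
      have hee' : e * e = e := hee
      linear_combination t * hee'
    exact ⟨Module.Baer.injective (DupAux.baer_A I h e heI hmul), e, hee, hI⟩
  · rintro ⟨hA, e, hee, hI⟩
    exact Module.Baer.injective (DupAux.baer_R I hA e hee hI)
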